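/- There exists a norm N on the real Hilbert space ℓ² of square-summable real sequences such that: N is equivalent to the standard ℓ² norm; N is a lattice norm for the coordinatewise order (that is, if |x(n)| ≤ |y(n)| for all n then N(x) ≤ N(y)), so that (ℓ², N) with the coordinatewise order is a Banach lattice; and (ℓ², N) is not weakly monotone. Consequently there is a Banach lattice isomorphic to ℓ² that does not have the Bishop–Phelps–Bollobás property for positive functionals. -/

import Mathlib

open scoped ENNReal

/-- The *Bishop–Phelps–Bollobás property for positive functionals* of a Banach lattice. -/
def BPBppPositive (X : Type*) [NormedAddCommGroup X] [Lattice X] [HasSolidNorm X] [IsOrderedAddMonoid X] [NormedSpace ℝ X] : Prop :=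
  ∀ ε : ℝ, 0 < ε → ε < 1 → ∃ η : ℝ, 0 < η ∧ η < ε ∧
    ∀ f : X →L[ℝ] ℝ, (∀ z : X, 0 ≤ z → 0 ≤ f z) → ‖f‖ = 1 →
      ∀ x₀ : X, ‖x₀‖ = 1 → 1 - η < f x₀ →
        ∃ (y : X) (g : X →L[ℝ] ℝ), ‖y‖ = 1 ∧
          (∀ z : X, 0 ≤ z → 0 ≤ g z) ∧ ‖g‖ = 1 ∧
          g y = 1 ∧ ‖y - x₀‖ < ε ∧ ‖g - f‖ < ε

/-- A Banach lattice is *weakly monotone* (WM) if for every `0 < ε < 1` there is `0 < δ < ε`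
such that whenever `‖x‖ ≤ 1` and `‖x⁺‖ > 1 - δ`, there exists `y` with `‖y‖ = 1`,
`‖y⁺‖ = 1` and `‖y - x‖ < ε`. -/
def WeaklyMonotoneLattice (X : Type*) [NormedAddCommGroup X] [Lattice X] [HasSolidNorm X] [IsOrderedAddMonoid X] : Prop :=
  ∀ ε : ℝ, 0 < ε → ε < 1 → ∃ δ : ℝ, 0 < δ ∧ δ < ε ∧
    ∀ x : X, ‖x‖ ≤ 1 → 1 - δ < ‖x ⊔ 0‖ →
      ∃ y : X, ‖y‖ = 1 ∧ ‖y ⊔ 0‖ = 1 ∧ ‖y - x‖ < ε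

/-- A Banach lattice which, as a normed space, is isomorphic to `ℓ²` (i.e. `ℓ²` with an
equivalent lattice norm for the coordinatewise order), but which is not weakly monotone and
does not have the Bishop–Phelps–Bollobás property for positive functionals. -/
structure Ell2Counterexample where
  /-- the underlying space -/
  X : Type
  /-- the lattice-norm structure (the norm is a lattice norm for the order) -/
  [inst1 : NormedAddCommGroup X]
  [inst1_lattice : Lattice X]
  [inst1_solid : HasSolidNorm X]
  [inst1_ordered : IsOrderedAddMonoid X]
  /-- the real normed-space structure -/
  [inst2 : NormedSpace ℝ X]
  [inst3 : PosSMulStrictMono ℝ X]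
  /-- `X` is `ℓ²` with an equivalent norm -/
  equiv : X ≃L[ℝ] lp (fun _ : ℕ => ℝ) 2
  /-- the order of `X` is the coordinatewise order of `ℓ²` -/
  order_iff : ∀ x : X, 0 ≤ x ↔ ∀ n : ℕ, 0 ≤ equiv x n
  not_weaklyMonotone : ¬ WeaklyMonotoneLattice X
  not_BPBpp : ¬ BPBppPositive X

noncomputable section
namespace Stmt19


abbrev L2 : Type := lp (fun _ : ℕ => ℝ) 2

lemma coord_le_norm (x : L2) (n : ℕ) : |x n| ≤ ‖x‖ := by
  simpa [Real.norm_eq_abs] using lp.norm_apply_le_norm (by norm_num : (2:ℝ≥0∞) ≠ 0) x n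

lemma lp_norm_mono {x y : L2} (h : ∀ n, |x n| ≤ |y n|) : ‖x‖ ≤ ‖y‖ := by
  have hp : 0 < ((2:ℝ≥0∞)).toReal := by norm_num
  rw [lp.norm_eq_tsum_rpow hp x, lp.norm_eq_tsum_rpow hp y]
  apply Real.rpow_le_rpow
  · exact tsum_nonneg fun n => Real.rpow_nonneg (norm_nonneg _) _
  · refine Summable.tsum_le_tsum (fun n => ?_) ((lp.memℓp x).summable hp) ((lp.memℓp y).summable hp)
    exact Real.rpow_le_rpow (norm_nonneg _) (by simpa [Real.norm_eq_abs] using h n) hp.le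
  · positivity

lemma memℓp_of_le {f : ℕ → ℝ} (g : L2) (h : ∀ n, |f n| ≤ |g n|) : Memℓp f 2 := by
  have hp : 0 < ((2:ℝ≥0∞)).toReal := by norm_num
  refine memℓp_gen ?_
  refine Summable.of_nonneg_of_le (fun n => Real.rpow_nonneg (norm_nonneg _) _)
    (fun n => Real.rpow_le_rpow (norm_nonneg _) (by simpa [Real.norm_eq_abs] using h n) hp.le)
    ((lp.memℓp g).summable hp)

/-- the sup part of the norm -/
def S (x : L2) : ℝ := ⨆ n, |x n|

lemma S_bdd (x : L2) : BddAbove (Set.range fun n => |x n|) :=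
  ⟨‖x‖, by rintro - ⟨n, rfl⟩; exact coord_le_norm x n⟩

lemma le_S (x : L2) (n : ℕ) : |x n| ≤ S x := le_ciSup (S_bdd x) n

lemma S_le (x : L2) {c : ℝ} (h : ∀ n, |x n| ≤ c) : S x ≤ c := ciSup_le h

lemma S_nonneg (x : L2) : 0 ≤ S x := le_trans (abs_nonneg _) (le_S x 0)

lemma S_le_norm (x : L2) : S x ≤ ‖x‖ := S_le x (coord_le_norm x)

lemma S_mono {x y : L2} (h : ∀ n, |x n| ≤ |y n|) : S x ≤ S y :=
  S_le x fun n => (h n).trans (le_S y n)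

/-- the weighted ℓ¹ part of the norm -/
def Hh (x : L2) : ℝ := ∑' n, (1/2:ℝ)^n * |x n|

lemma Hh_summable (x : L2) : Summable fun n => (1/2:ℝ)^n * |x n| := by
  refine Summable.of_nonneg_of_le (fun n => by positivity) (fun n => ?_)
    ((summable_geometric_of_lt_one (r := (1/2:ℝ)) (by norm_num) (by norm_num)).mul_right ‖x‖)
  exact mul_le_mul_of_nonneg_left (coord_le_norm x n) (by positivity)

lemma Hh_nonneg (x : L2) : 0 ≤ Hh x := tsum_nonneg fun n => by positivity

lemma Hh_mono {x y : L2} (h : ∀ n, |x n| ≤ |y n|) : Hh x ≤ Hh y :=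
  Summable.tsum_le_tsum (fun n => mul_le_mul_of_nonneg_left (h n) (by positivity))
    (Hh_summable x) (Hh_summable y)

lemma Hh_le_norm (x : L2) : Hh x ≤ 2 * ‖x‖ := by
  have := Summable.tsum_le_tsum (f := fun n => (1/2:ℝ)^n * |x n|)
    (g := fun n => (1/2:ℝ)^n * ‖x‖)
    (fun n => mul_le_mul_of_nonneg_left (coord_le_norm x n) (by positivity))
    (Hh_summable x)
    ((summable_geometric_of_lt_one (r := (1/2:ℝ)) (by norm_num) (by norm_num)).mul_right ‖x‖)
  calc Hh x ≤ ∑' n, (1/2:ℝ)^n * ‖x‖ := this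
  _ = 2 * ‖x‖ := by rw [tsum_mul_right, tsum_geometric_two]

lemma Hh_strict_mono {x y : L2} (h : ∀ n, |x n| ≤ |y n|) (m : ℕ) (hm : |x m| < |y m|) :
    Hh x < Hh y := by
  refine Summable.tsum_lt_tsum (i := m) (fun n => mul_le_mul_of_nonneg_left (h n) (by positivity))
    ?_ (Hh_summable x) (Hh_summable y)
  have : (0:ℝ) < (1/2:ℝ)^m := by positivity
  exact (mul_lt_mul_iff_right₀ this).2 hm

/-- the full norm -/
def Nn (x : L2) : ℝ := max ‖x‖ ((6/5) * S x) + Hh x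

lemma Nn_nonneg (x : L2) : 0 ≤ Nn x :=
  add_nonneg (le_trans (norm_nonneg x) (le_max_left _ _)) (Hh_nonneg x)

lemma norm_le_Nn (x : L2) : ‖x‖ ≤ Nn x :=
  le_add_of_le_of_nonneg (le_max_left _ _) (Hh_nonneg x)

lemma Nn_le_4norm (x : L2) : Nn x ≤ 4 * ‖x‖ := by
  have h1 : max ‖x‖ ((6/5) * S x) ≤ (6/5) * ‖x‖ := by
    refine max_le (by nlinarith [norm_nonneg x]) ?_
    nlinarith [S_le_norm x]
  have h2 := Hh_le_norm x
  simp only [Nn]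
  nlinarith [norm_nonneg x]

lemma Nn_mono {x y : L2} (h : ∀ n, |x n| ≤ |y n|) : Nn x ≤ Nn y :=
  add_le_add (max_le_max (lp_norm_mono h)
    (mul_le_mul_of_nonneg_left (S_mono h) (by norm_num))) (Hh_mono h)

lemma Nn_strict_mono {x y : L2} (h : ∀ n, |x n| ≤ |y n|) (m : ℕ) (hm : |x m| < |y m|) :
    Nn x < Nn y :=
  add_lt_add_of_le_of_lt (max_le_max (lp_norm_mono h)
    (mul_le_mul_of_nonneg_left (S_mono h) (by norm_num))) (Hh_strict_mono h m hm)

lemma Nn_add_le (x y : L2) : Nn (x + y) ≤ Nn x + Nn y := by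
  have hc : ∀ n, |(x + y) n| ≤ |x n| + |y n| := by
    intro n; rw [lp.coeFn_add]; exact abs_add_le _ _
  have hS : S (x + y) ≤ S x + S y := S_le _ fun n => (hc n).trans (add_le_add (le_S x n) (le_S y n))
  have hH : Hh (x + y) ≤ Hh x + Hh y := by
    have h1 : Hh (x+y) ≤ ∑' n, ((1/2:ℝ)^n * |x n| + (1/2:ℝ)^n * |y n|) := by
      refine Summable.tsum_le_tsum (fun n => ?_) (Hh_summable _) ((Hh_summable x).add (Hh_summable y))
      rw [← mul_add]; exact mul_le_mul_of_nonneg_left (hc n) (by positivity)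
    rw [Summable.tsum_add (Hh_summable x) (Hh_summable y)] at h1; exact h1
  have hG : max ‖x + y‖ ((6/5) * S (x+y)) ≤ max ‖x‖ ((6/5)*S x) + max ‖y‖ ((6/5)*S y) := by
    refine max_le (le_trans (norm_add_le x y) (add_le_add (le_max_left _ _) (le_max_left _ _))) ?_
    calc (6/5) * S (x+y) ≤ (6/5) * (S x + S y) := by nlinarith
    _ = (6/5)*S x + (6/5)*S y := by ring
    _ ≤ _ := add_le_add (le_max_right _ _) (le_max_right _ _)
  calc Nn (x+y) ≤ _ := add_le_add hG hH
  _ = Nn x + Nn y := by simp [Nn]; ring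

lemma Nn_neg (x : L2) : Nn (-x) = Nn x := by
  have habs : ∀ n, |(-x : L2) n| = |x n| := by intro n; rw [lp.coeFn_neg]; simp
  have hS : S (-x) = S x := by simp only [S]; exact iSup_congr habs
  have hH : Hh (-x) = Hh x := by simp only [Hh]; exact tsum_congr fun n => by rw [habs n]
  simp only [Nn, norm_neg, hS, hH]

lemma Nn_smul (c : ℝ) (x : L2) : Nn (c • x) = |c| * Nn x := by
  have habs : ∀ n, |(c • x : L2) n| = |c| * |x n| := by
    intro n; rw [lp.coeFn_smul]; simp [abs_mul]
  have hS : S (c • x) = |c| * S x := by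
    rcases eq_or_ne c 0 with rfl | hc
    · have h0 : ((0:ℝ) • x : L2) = 0 := zero_smul ℝ x
      rw [h0]
      have : ∀ n, |(0 : L2) n| = (0:ℝ) := by intro n; rw [lp.coeFn_zero]; simp
      simp [S, this]
    · refine le_antisymm (S_le _ fun n => ?_) ?_
      · rw [habs n]; exact mul_le_mul_of_nonneg_left (le_S x n) (abs_nonneg c)
      · rw [← le_div_iff₀' (abs_pos.2 hc)]
        refine S_le _ fun n => ?_
        rw [le_div_iff₀' (abs_pos.2 hc), ← habs n]; exact le_S _ n
  have hH : Hh (c • x) = |c| * Hh x := by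
    simp only [Hh, ← tsum_mul_left]
    exact tsum_congr fun n => by rw [habs n]; ring
  simp only [Nn, norm_smul, Real.norm_eq_abs, hS, hH]
  rw [mul_add, mul_max_of_nonneg _ _ (abs_nonneg c)]; ring_nf

lemma Nn_eq_zero {x : L2} (h : Nn x = 0) : x = 0 := by
  have := norm_le_Nn x
  rw [h] at this
  exact norm_le_zero_iff.mp this



def X : Type := L2

instance : AddCommGroup X := inferInstanceAs (AddCommGroup L2)
instance : Module ℝ X := inferInstanceAs (Module ℝ L2)

def toL2 (x : X) : L2 := x
def ofL2 (x : L2) : X := x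
def cf (x : X) : ℕ → ℝ := (toL2 x : ∀ _ : ℕ, ℝ)

lemma cf_injective : Function.Injective cf := fun x y h => lp.ext h
lemma cf_add (x y : X) : cf (x + y) = cf x + cf y := lp.coeFn_add (toL2 x) (toL2 y)
lemma cf_neg (x : X) : cf (-x) = - cf x := lp.coeFn_neg (toL2 x)
lemma cf_sub (x y : X) : cf (x - y) = cf x - cf y := lp.coeFn_sub (toL2 x) (toL2 y)
lemma cf_zero : cf (0 : X) = 0 := rfl
lemma cf_smul (c : ℝ) (x : X) : cf (c • x) = c • cf x := lp.coeFn_smul c (toL2 x)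

lemma memℓp_abs (x : X) : Memℓp (fun n => |cf x n|) 2 :=
  memℓp_of_le (toL2 x) fun n => (abs_abs _).le

lemma memℓp_max (x y : X) : Memℓp (fun n => max (cf x n) (cf y n)) 2 := by
  have h1 : Memℓp ((2⁻¹:ℝ) • (cf x + cf y + fun n => |cf (x - y) n|)) 2 :=
    (((lp.memℓp (toL2 x)).add (lp.memℓp (toL2 y))).add (memℓp_abs (x - y))).const_smul _
  convert h1 using 1
  funext n
  simp only [Pi.smul_apply, Pi.add_apply, cf_sub, Pi.sub_apply, smul_eq_mul]
  rcases le_total (cf x n) (cf y n) with h | h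
  · rw [max_eq_right h, abs_of_nonpos (by linarith)]; ring
  · rw [max_eq_left h, abs_of_nonneg (by linarith)]; ring

lemma memℓp_min (x y : X) : Memℓp (fun n => min (cf x n) (cf y n)) 2 := by
  have h := (memℓp_max (-x) (-y)).neg
  convert h using 1
  funext n
  simp only [Pi.neg_apply, cf_neg]
  rcases le_total (cf x n) (cf y n) with hle | hle
  · rw [min_eq_left hle, max_eq_left (by simpa using hle)]; ring
  · rw [min_eq_right hle, max_eq_right (by simpa using hle)]; ring

instance : Lattice X where
  le x y := ∀ n, cf x n ≤ cf y n
  le_refl x n := le_refl _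
  le_trans x y z h1 h2 n := (h1 n).trans (h2 n)
  le_antisymm x y h1 h2 := cf_injective (funext fun n => le_antisymm (h1 n) (h2 n))
  sup x y := ofL2 ⟨fun n => max (cf x n) (cf y n), memℓp_max x y⟩
  le_sup_left x y n := le_max_left _ _
  le_sup_right x y n := le_max_right _ _
  sup_le x y z h1 h2 n := max_le (h1 n) (h2 n)
  inf x y := ofL2 ⟨fun n => min (cf x n) (cf y n), memℓp_min x y⟩
  inf_le_left x y n := min_le_left _ _
  inf_le_right x y n := min_le_right _ _
  le_inf x y z h1 h2 n := le_min (h1 n) (h2 n)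

lemma le_iff {x y : X} : x ≤ y ↔ ∀ n, cf x n ≤ cf y n := Iff.rfl

lemma cf_sup (x y : X) (n : ℕ) : cf (x ⊔ y) n = max (cf x n) (cf y n) := rfl


/-! ### normed instances on `X` -/

def NX : AddGroupNorm X where
  toFun x := Nn (toL2 x)
  map_zero' := by
    have : Nn (0 : L2) = 0 := by
      have h := Nn_smul 0 (0 : L2)
      simpa using h
    exact this
  add_le' x y := Nn_add_le (toL2 x) (toL2 y)
  neg' x := Nn_neg (toL2 x)
  eq_zero_of_map_eq_zero' x h := Nn_eq_zero h

instance : NormedAddCommGroup X := NX.toNormedAddCommGroup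

lemma normX_def (x : X) : ‖x‖ = Nn (toL2 x) := rfl

instance : NormedSpace ℝ X where
  norm_smul_le c x := by
    rw [normX_def, normX_def]
    exact le_of_eq (by rw [Real.norm_eq_abs]; exact Nn_smul c (toL2 x))

lemma cf_abs (x : X) (n : ℕ) : cf |x| n = |cf x n| := by
  have : |x| = x ⊔ -x := rfl
  rw [this, cf_sup, cf_neg]
  simp [abs_eq_max_neg]

instance : HasSolidNorm X where
  solid x y h := by
    rw [normX_def, normX_def]
    refine Nn_mono fun n => ?_
    have := h n
    rw [cf_abs, cf_abs] at this
    exact this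

instance : IsOrderedAddMonoid X where
  add_le_add_left x y h z n := by
    rw [cf_add, cf_add]
    simp only [Pi.add_apply]
    linarith [h n]

instance : PosSMulStrictMono ℝ X where
  smul_lt_smul_of_pos_left := by
    intro c hc a b hab
    rw [lt_iff_le_and_ne] at hab ⊢
    constructor
    · intro n
      rw [cf_smul, cf_smul]
      exact mul_le_mul_of_nonneg_left (hab.1 n) hc.le
    · intro hEq
      exact hab.2 (smul_right_injective X hc.ne' hEq)

/-! ### the equivalence with `ℓ²` -/

def eLin : X ≃ₗ[ℝ] L2 where
  toFun x := toL2 x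
  invFun x := ofL2 x
  map_add' x y := rfl
  map_smul' c x := rfl
  left_inv x := rfl
  right_inv x := rfl

def eCL : X ≃L[ℝ] L2 :=
  { eLin with
    continuous_toFun := by
      refine AddMonoidHomClass.continuous_of_bound eLin.toLinearMap 1 fun x => ?_
      rw [one_mul]
      exact norm_le_Nn (toL2 x)
    continuous_invFun := by
      refine AddMonoidHomClass.continuous_of_bound eLin.symm.toLinearMap 4 fun x => ?_
      exact Nn_le_4norm x }

lemma order_iff' (x : X) : 0 ≤ x ↔ ∀ n : ℕ, 0 ≤ (eCL x) n := by
  constructor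
  · intro h n; exact h n
  · intro h n; exact h n

/-! ### single vectors -/

lemma cf_single (k : ℕ) (a : ℝ) (n : ℕ) :
    cf (ofL2 (lp.single 2 k a)) n = if n = k then a else 0 := by
  rcases eq_or_ne n k with rfl | h
  · simp [cf, ofL2, toL2, lp.single_apply_self]
  · simp [cf, ofL2, toL2, lp.single_apply_ne _ _ _ h, h]

lemma lpnorm_single (k : ℕ) (a : ℝ) : ‖(lp.single 2 k a : L2)‖ = |a| := by
  have := lp.norm_single (E := fun _ : ℕ => ℝ) (p := 2) (by norm_num) k a
  simpa [Real.norm_eq_abs] using this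

lemma S_single (k : ℕ) (a : ℝ) : S (lp.single 2 k a) = |a| := by
  refine le_antisymm (S_le _ fun n => ?_) ?_
  · have := cf_single k a n
    rw [show ((lp.single 2 k a : L2) n) = cf (ofL2 (lp.single 2 k a)) n from rfl, this]
    split <;> simp
  · have := le_S (lp.single 2 k a) k
    rwa [show ((lp.single 2 k a : L2) k) = cf (ofL2 (lp.single 2 k a)) k from rfl,
      cf_single, if_pos rfl] at this

lemma Hh_single (k : ℕ) (a : ℝ) : Hh (lp.single 2 k a) = (1/2:ℝ)^k * |a| := by
  rw [Hh]
  rw [tsum_eq_single k]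
  · rw [show ((lp.single 2 k a : L2) k) = cf (ofL2 (lp.single 2 k a)) k from rfl,
      cf_single, if_pos rfl]
  · intro n hn
    rw [show ((lp.single 2 k a : L2) n) = cf (ofL2 (lp.single 2 k a)) n from rfl,
      cf_single, if_neg hn]
    simp

lemma Nn_single (k : ℕ) (a : ℝ) : Nn (lp.single 2 k a) = (6/5 + (1/2:ℝ)^k) * |a| := by
  rw [Nn, lpnorm_single, S_single, Hh_single]
  rw [max_eq_right (by nlinarith [abs_nonneg a])]
  ring

/-! ### the witness vectors -/

def tt (k : ℕ) : ℝ := (1/2:ℝ)^k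
def aa (k : ℕ) : ℝ := 20 / (24 + 25 * tt k)
def bb (k : ℕ) : ℝ := aa k / 2

lemma tt_pos (k : ℕ) : 0 < tt k := by unfold tt; positivity
lemma tt_le_one (k : ℕ) : tt k ≤ 1 := pow_le_one₀ (by norm_num) (by norm_num)
lemma aa_pos (k : ℕ) : 0 < aa k := by
  have h := tt_pos k
  rw [aa]
  exact div_pos (by norm_num) (by nlinarith)
lemma aa_lt (k : ℕ) : aa k < 5/6 := by
  have h := tt_pos k
  rw [aa, div_lt_iff₀ (by nlinarith)]
  nlinarith
lemma aa_gt (k : ℕ) (h2 : tt k ≤ 1/2) : 1/2 < aa k := by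
  have h1 := tt_pos k
  rw [aa, lt_div_iff₀ (by nlinarith)]
  nlinarith

def uu (k : ℕ) : X := ofL2 (lp.single 2 k (aa k))
def vv (k : ℕ) : X := ofL2 (lp.single 2 (k+1) (bb k))
def ww (k : ℕ) : X := uu k - vv k

lemma cf_ww (k : ℕ) (n : ℕ) :
    cf (ww k) n = if n = k then aa k else if n = k + 1 then -(bb k) else 0 := by
  rw [ww, cf_sub, Pi.sub_apply, uu, vv, cf_single, cf_single]
  rcases eq_or_ne n k with rfl | h1
  · rw [if_pos rfl, if_pos rfl, if_neg (by omega)]; ring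
  · rcases eq_or_ne n (k+1) with rfl | h2
    · rw [if_neg h1, if_neg h1, if_pos rfl, if_pos rfl]; ring
    · rw [if_neg h1, if_neg h1, if_neg h2, if_neg h2]; ring

lemma toL2_ww (k : ℕ) :
    toL2 (ww k) = lp.single 2 k (aa k) + lp.single 2 (k+1) (-(bb k)) := by
  rw [lp.single_neg]
  rfl

lemma lpnorm_ww_sq (k : ℕ) : ‖toL2 (ww k)‖ ^ (2:ℕ) = aa k ^ 2 + bb k ^ 2 := by
  classical
  set f : ℕ → ℝ := fun n => if n = k then aa k else -(bb k) with hf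
  have hsum : toL2 (ww k) = ∑ i ∈ ({k, k+1} : Finset ℕ), lp.single 2 i (f i) := by
    rw [Finset.sum_pair (by omega : k ≠ k + 1), toL2_ww]
    congr 1
    · simp [hf]
    · rw [show f (k+1) = -(bb k) by simp [hf]]
  have h2 := lp.norm_sum_single (p := 2) (by norm_num) f ({k, k+1} : Finset ℕ)
  rw [← hsum] at h2
  have htr : ((2:ℝ≥0∞)).toReal = ((2:ℕ):ℝ) := by norm_num
  rw [htr, Real.rpow_natCast] at h2
  rw [h2, Finset.sum_pair (by omega : k ≠ k + 1)]
  have : ∀ x : ℝ, ‖x‖ ^ ((2:ℕ):ℝ) = x ^ (2:ℕ) := by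
    intro x
    rw [Real.rpow_natCast]
    rw [Real.norm_eq_abs, sq_abs]
  rw [this, this]
  simp [hf]

lemma lpnorm_ww_le (k : ℕ) : ‖toL2 (ww k)‖ ≤ (6/5) * aa k := by
  have h := lpnorm_ww_sq k
  have ha := aa_pos k
  have hb : bb k = aa k / 2 := rfl
  have hn := norm_nonneg (toL2 (ww k))
  nlinarith [h, hn]

lemma S_ww (k : ℕ) : S (toL2 (ww k)) = aa k := by
  have ha := aa_pos k
  have hb : bb k = aa k / 2 := rfl
  refine le_antisymm (S_le _ fun n => ?_) ?_
  · rw [show ((toL2 (ww k) : ∀ _:ℕ, ℝ) n) = cf (ww k) n from rfl, cf_ww]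
    rcases eq_or_ne n k with rfl | h1
    · rw [if_pos rfl, abs_of_pos ha]
    · rcases eq_or_ne n (k+1) with rfl | h2
      · rw [if_neg h1, if_pos rfl]
        rw [abs_neg, abs_of_pos (by linarith)]
        linarith
      · rw [if_neg h1, if_neg h2]; simp [ha.le]
  · have := le_S (toL2 (ww k)) k
    rwa [show ((toL2 (ww k) : ∀ _:ℕ, ℝ) k) = cf (ww k) k from rfl, cf_ww, if_pos rfl,
      abs_of_pos ha] at this

lemma Hh_ww (k : ℕ) : Hh (toL2 (ww k)) = tt k * aa k + (tt k / 2) * bb k := by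
  have ha := aa_pos k
  have hb : bb k = aa k / 2 := rfl
  rw [Hh]
  have hfun : ∀ n, (1/2:ℝ)^n * |(toL2 (ww k) : ∀ _:ℕ, ℝ) n| =
      (if n = k then tt k * aa k else if n = k+1 then (tt k / 2) * bb k else 0) := by
    intro n
    rw [show ((toL2 (ww k) : ∀ _:ℕ, ℝ) n) = cf (ww k) n from rfl, cf_ww]
    rcases eq_or_ne n k with rfl | h1
    · rw [if_pos rfl, if_pos rfl, abs_of_pos ha, tt]
    · rcases eq_or_ne n (k+1) with rfl | h2
      · rw [if_neg h1, if_neg h1, if_pos rfl, if_pos rfl, abs_neg,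
          abs_of_pos (by linarith), tt, pow_succ]
        ring
      · rw [if_neg h1, if_neg h1, if_neg h2, if_neg h2, abs_zero]
        ring
  calc (∑' n, (1/2:ℝ)^n * |(toL2 (ww k) : ∀ _:ℕ, ℝ) n|)
      = ∑' n, (if n = k then tt k * aa k else if n = k+1 then (tt k / 2) * bb k else 0) :=
        tsum_congr hfun
    _ = tt k * aa k + (tt k / 2) * bb k := by
        rw [tsum_eq_sum (s := ({k, k+1} : Finset ℕ)) (by
          intro n hn
          simp only [Finset.mem_insert, Finset.mem_singleton] at hn
          push_neg at hn
          rw [if_neg hn.1, if_neg hn.2])]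
        rw [Finset.sum_pair (by omega : k ≠ k + 1), if_pos rfl, if_neg (by omega), if_pos rfl]

lemma Nn_ww (k : ℕ) : Nn (toL2 (ww k)) = 1 := by
  have ha := aa_pos k
  have ht := tt_pos k
  have hb : bb k = aa k / 2 := rfl
  have haa : aa k * (24 + 25 * tt k) = 20 := by
    rw [aa, div_mul_cancel₀]
    nlinarith
  rw [Nn, S_ww, Hh_ww, max_eq_right (lpnorm_ww_le k)]
  nlinarith

lemma norm_ww (k : ℕ) : ‖ww k‖ = 1 := Nn_ww k

lemma ww_sup_zero (k : ℕ) : ww k ⊔ 0 = uu k := by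
  apply cf_injective
  funext n
  rw [cf_sup, cf_zero, cf_ww, Pi.zero_apply, uu, cf_single]
  have ha := aa_pos k
  have hb : (0:ℝ) < bb k := by rw [bb]; linarith
  rcases eq_or_ne n k with rfl | h1
  · rw [if_pos rfl, if_pos rfl, max_eq_left ha.le]
  · rcases eq_or_ne n (k+1) with rfl | h2
    · rw [if_neg h1, if_pos rfl, if_neg h1, max_eq_right (by linarith)]
    · rw [if_neg h1, if_neg h2, if_neg h1, max_self]

lemma norm_uu (k : ℕ) : ‖uu k‖ = (6/5 + tt k) * aa k := by
  rw [normX_def, show toL2 (uu k) = lp.single 2 k (aa k) from rfl, Nn_single,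
    abs_of_pos (aa_pos k), tt]

lemma norm_uu_gt (k : ℕ) : 1 - tt k < ‖uu k‖ := by
  have ha := aa_pos k
  have ht := tt_pos k
  have h5 : aa k < 5/6 := aa_lt k
  have haa : aa k * (24 + 25 * tt k) = 20 := by
    rw [aa, div_mul_cancel₀]; nlinarith
  rw [norm_uu]
  nlinarith

lemma norm_uu_le_one (k : ℕ) : ‖uu k‖ ≤ 1 := by
  have ha := aa_pos k
  have ht := tt_pos k
  have haa : aa k * (24 + 25 * tt k) = 20 := by
    rw [aa, div_mul_cancel₀]; nlinarith
  rw [norm_uu]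
  nlinarith

/-! ### key structural lemmas -/

lemma norm_sup_zero_le (y : X) : ‖y ⊔ 0‖ ≤ ‖y‖ := by
  rw [normX_def, normX_def]
  refine Nn_mono fun n => ?_
  rw [show ((toL2 (y ⊔ 0) : ∀ _:ℕ, ℝ) n) = cf (y ⊔ 0) n from rfl, cf_sup, cf_zero]
  rcases le_total (cf y n) 0 with h | h
  · rw [max_eq_right (by simpa using h)]
    simp
  · rw [max_eq_left (by simpa using h)]
    exact le_rfl

lemma nonneg_of_norms (y : X) (h1 : ‖y‖ = 1) (h2 : ‖y ⊔ 0‖ = 1) : 0 ≤ y := by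
  by_contra hneg
  have : ∃ m, cf y m < 0 := by
    by_contra hall
    push_neg at hall
    exact hneg fun n => by simpa [cf_zero] using hall n
  obtain ⟨m, hm⟩ := this
  have hlt : Nn (toL2 (y ⊔ 0)) < Nn (toL2 y) := by
    refine Nn_strict_mono (fun n => ?_) m ?_
    · rw [show ((toL2 (y ⊔ 0) : ∀ _:ℕ, ℝ) n) = cf (y ⊔ 0) n from rfl, cf_sup, cf_zero]
      rcases le_total (cf y n) 0 with h | h
      · rw [max_eq_right (by simpa using h)]; simp
      · rw [max_eq_left (by simpa using h)]
        exact le_rfl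
    · rw [show ((toL2 (y ⊔ 0) : ∀ _:ℕ, ℝ) m) = cf (y ⊔ 0) m from rfl, cf_sup, cf_zero]
      rw [max_eq_right (by simpa using hm.le), Pi.zero_apply, abs_zero]
      rw [show ((toL2 y : ∀ _:ℕ, ℝ) m) = cf y m from rfl]
      exact abs_pos.mpr hm.ne
  rw [← normX_def, ← normX_def, h1, h2] at hlt
  exact lt_irrefl _ hlt

lemma dist_ge (k : ℕ) (htk : tt k ≤ 1/2) (y : X) (hy : 0 ≤ y) : 1/4 < ‖y - ww k‖ := by
  have ha := aa_pos k
  have hag := aa_gt k htk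
  have ht := tt_pos k
  have hb : bb k = aa k / 2 := rfl
  have key : Nn (lp.single 2 (k+1) (bb k)) ≤ Nn (toL2 (y - ww k)) := by
    refine Nn_mono fun n => ?_
    rw [show ((toL2 (y - ww k) : ∀ _:ℕ, ℝ) n) = cf (y - ww k) n from rfl, cf_sub,
      Pi.sub_apply, cf_ww]
    rw [show ((lp.single 2 (k+1) (bb k) : L2) n) = cf (ofL2 (lp.single 2 (k+1) (bb k))) n
      from rfl, cf_single]
    rcases eq_or_ne n (k+1) with rfl | h2
    · rw [if_pos rfl, if_neg (by omega), if_pos rfl]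
      have hyn : 0 ≤ cf y (k+1) := by simpa [cf_zero] using hy (k+1)
      rw [abs_of_pos (by linarith), abs_of_nonneg (by linarith)]
      linarith
    · rw [if_neg h2]
      simp
  have hsingle : Nn (lp.single 2 (k+1) (bb k)) = (6/5 + tt k / 2) * bb k := by
    rw [Nn_single, abs_of_pos (by linarith), tt, pow_succ]
    ring
  have : (1:ℝ)/4 < (6/5 + tt k / 2) * bb k := by nlinarith
  calc (1:ℝ)/4 < (6/5 + tt k / 2) * bb k := this
    _ ≤ Nn (toL2 (y - ww k)) := by rw [← hsingle]; exact key
    _ = ‖y - ww k‖ := (normX_def _).symm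

/-! ### the two negative results -/

theorem notWM : ¬ WeaklyMonotoneLattice X := by
  intro hWM
  obtain ⟨δ, hδ0, hδε, P⟩ := hWM (1/4) (by norm_num) (by norm_num)
  obtain ⟨k, hk⟩ : ∃ k : ℕ, (1/2:ℝ)^k < δ := exists_pow_lt_of_lt_one hδ0 (by norm_num)
  have htδ : tt k < δ := hk
  obtain ⟨y, hy1, hy2, hy3⟩ := P (ww k) (le_of_eq (norm_ww k))
    (by rw [ww_sup_zero]; have := norm_uu_gt k; linarith)
  have hy0 : 0 ≤ y := nonneg_of_norms y hy1 hy2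
  have := dist_ge k (by rw [tt]; nlinarith [tt_pos k]) y hy0
  linarith

def fLin (k : ℕ) : X →ₗ[ℝ] ℝ where
  toFun z := (6/5 + tt k) * cf z k
  map_add' x y := by
    simp only [cf_add, Pi.add_apply]
    ring
  map_smul' c x := by
    simp only [cf_smul, Pi.smul_apply, smul_eq_mul, RingHom.id_apply]
    ring

lemma fLin_bound (k : ℕ) (z : X) : |fLin k z| ≤ ‖z‖ := by
  have h1 : Nn (lp.single 2 k (cf z k)) ≤ Nn (toL2 z) := by
    refine Nn_mono fun n => ?_
    rw [show ((lp.single 2 k (cf z k) : L2) n) = cf (ofL2 (lp.single 2 k (cf z k))) n from rfl,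
      cf_single]
    rcases eq_or_ne n k with rfl | h
    · rw [if_pos rfl]
      exact le_refl _
    · rw [if_neg h]; simp
  rw [Nn_single] at h1
  have ht := tt_pos k
  have : |fLin k z| = (6/5 + tt k) * |cf z k| := by
    rw [show fLin k z = (6/5 + tt k) * cf z k from rfl, abs_mul, abs_of_pos (by linarith)]
  rw [this, normX_def]
  exact h1

def ff (k : ℕ) : X →L[ℝ] ℝ :=
  (fLin k).mkContinuous 1 (fun z => by rw [one_mul, Real.norm_eq_abs]; exact fLin_bound k z)

lemma ff_apply (k : ℕ) (z : X) : ff k z = (6/5 + tt k) * cf z k := rfl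

lemma ff_pos (k : ℕ) : ∀ z : X, 0 ≤ z → 0 ≤ ff k z := by
  intro z hz
  rw [ff_apply]
  have ht := tt_pos k
  have : 0 ≤ cf z k := by simpa [cf_zero] using hz k
  nlinarith

lemma ff_norm (k : ℕ) : ‖ff k‖ = 1 := by
  refine le_antisymm ((fLin k).mkContinuous_norm_le zero_le_one _) ?_
  have h1 : ff k (uu k) = ‖uu k‖ := by
    rw [ff_apply, norm_uu, uu, cf_single, if_pos rfl]
  have h3 : 0 < ‖uu k‖ := by
    rw [norm_uu]
    have := aa_pos k; have := tt_pos k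
    nlinarith
  have h2 := (ff k).le_opNorm (uu k)
  rw [h1, Real.norm_eq_abs, abs_of_pos h3] at h2
  exact le_of_mul_le_mul_right (by linarith) h3

lemma ff_ww (k : ℕ) : 1 - tt k < ff k (ww k) := by
  have h : ff k (ww k) = ‖uu k‖ := by
    rw [ff_apply, norm_uu, cf_ww, if_pos rfl]
  rw [h]
  exact norm_uu_gt k

theorem notBPB : ¬ BPBppPositive X := by
  intro hB
  obtain ⟨η, hη0, hηε, P⟩ := hB (1/4) (by norm_num) (by norm_num)
  obtain ⟨k, hk⟩ : ∃ k : ℕ, (1/2:ℝ)^k < η := exists_pow_lt_of_lt_one hη0 (by norm_num)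
  have htη : tt k < η := hk
  obtain ⟨y, g, hy1, gpos, hg1, hgy, hyx, -⟩ :=
    P (ff k) (ff_pos k) (ff_norm k) (ww k) (norm_ww k) (by have := ff_ww k; linarith)
  have hsup_le : ‖y ⊔ 0‖ ≤ 1 := by rw [← hy1]; exact norm_sup_zero_le y
  have hg_sup : g y ≤ g (y ⊔ 0) := by
    have h0 : 0 ≤ y ⊔ 0 - y := by
      rw [sub_nonneg]
      exact le_sup_left
    have := gpos _ h0
    rw [map_sub] at this
    linarith
  have hsup_ge : 1 ≤ ‖y ⊔ 0‖ := by
    have h2 := (g.le_opNorm (y ⊔ 0))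
    rw [hg1, one_mul, Real.norm_eq_abs] at h2
    have : (1:ℝ) ≤ g (y ⊔ 0) := by rw [← hgy]; exact hg_sup
    calc (1:ℝ) ≤ g (y ⊔ 0) := this
      _ ≤ |g (y ⊔ 0)| := le_abs_self _
      _ ≤ ‖y ⊔ 0‖ := h2
  have hy0 : 0 ≤ y := nonneg_of_norms y hy1 (le_antisymm hsup_le hsup_ge)
  have := dist_ge k (by rw [tt]; nlinarith [tt_pos k]) y hy0
  linarith

end Stmt19

/-- There is a lattice norm on `ℓ²`, equivalent to the standard norm and
compatible with the coordinatewise order, such that the resulting Banach lattice is not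
weakly monotone; consequently there is a Banach lattice isomorphic to `ℓ²` without the
Bishop–Phelps–Bollobás property for positive functionals. -/
theorem stmt19 : Nonempty Ell2Counterexample :=
  ⟨{ X := Stmt19.X
     equiv := Stmt19.eCL
     order_iff := Stmt19.order_iff'
     not_weaklyMonotone := Stmt19.notWM
     not_BPBpp := Stmt19.notBPB }⟩
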